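/- Let f : ℂ → ℂ be entire (complex differentiable on all of ℂ) and map real numbers to real numbers, and let k ≥ 1 be a natural number. Then (2/π) · ∫_0^{π/2} cos(2 k x) · Re[ f( (cos x) · e^{i x} ) ] dx = (1 / (2^{k+1} · k!)) · Re[ f^{(k)}(1/2) ], where f^{(k)} denotes the k-th complex iterated derivative of f. -/

import Mathlib

lemma deriv_im_zero {g : ℂ → ℂ} (hg : Differentiable ℂ g) (h : ∀ x : ℝ, (g x).im = 0)
    (x : ℝ) : (deriv g x).im = 0 := by
  have h1 : HasDerivAt (fun y : ℝ => g y) (deriv g x) x :=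
    (hg (x : ℂ)).hasDerivAt.comp_ofReal
  have h2 : HasDerivAt (fun y : ℝ => (g y).im) ((deriv g x).im) x :=
    Complex.imCLM.hasFDerivAt.comp_hasDerivAt x h1
  have h3 : (fun y : ℝ => (g y).im) = fun _ => (0 : ℝ) := funext h
  rw [h3] at h2
  exact h2.unique (hasDerivAt_const x 0)

lemma iteratedDeriv_im_zero {f : ℂ → ℂ} (hf : Differentiable ℂ f)
    (h : ∀ x : ℝ, (f x).im = 0) (n : ℕ) : ∀ x : ℝ, (iteratedDeriv n f x).im = 0 := by
  induction n with
  | zero => simpa using h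
  | succ n ih =>
    intro x
    rw [iteratedDeriv_succ]
    exact deriv_im_zero
      ((hf.contDiff (n := ⊤)).differentiable_iteratedDeriv n (by simp)) ih x

open Real in
lemma Jval (m : ℤ) : ∫ x in (0:ℝ)..(π/2), Real.cos (2*m*x) = if m = 0 then π/2 else 0 := by
  rcases eq_or_ne m 0 with rfl | hm
  · simp
  · have h2m : (2*(m:ℝ)) ≠ 0 := by
      simp [hm]
    rw [if_neg hm]
    have := intervalIntegral.integral_comp_mul_left (a := (0:ℝ)) (b := π/2)
      (f := Real.cos) (c := 2*(m:ℝ)) h2m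
    simp only [mul_assoc] at this ⊢
    rw [this, mul_zero, integral_cos]
    have h0 : 2 * ((m:ℝ) * (π/2)) = m * π := by ring
    rw [h0, Real.sin_int_mul_pi, show (2:ℝ)*0 = 0 by ring, Real.sin_zero, sub_zero, smul_zero]

open Real in
lemma ortho (k n : ℕ) (hk : 1 ≤ k) :
    ∫ x in (0:ℝ)..(π/2), Real.cos (2*k*x) * Real.cos (2*n*x)
      = if n = k then π/4 else 0 := by
  have key : ∀ x : ℝ, Real.cos (2*k*x) * Real.cos (2*n*x)
      = (Real.cos (2*((((k:ℤ)+n) : ℤ):ℝ)*x) + Real.cos (2*((((k:ℤ)-n) : ℤ):ℝ)*x))/2 := by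
    intro x
    push_cast
    rw [show 2*((k:ℝ)+n)*x = 2*k*x + 2*n*x by ring, show 2*((k:ℝ)-n)*x = 2*k*x - 2*n*x by ring,
      Real.cos_add, Real.cos_sub]
    ring
  simp_rw [key]
  rw [intervalIntegral.integral_div,
    intervalIntegral.integral_add
      (((by fun_prop : Continuous (fun x : ℝ => Real.cos (2*((((k:ℤ)+n) : ℤ):ℝ)*x))).intervalIntegrable _ _))
      (((by fun_prop : Continuous (fun x : ℝ => Real.cos (2*((((k:ℤ)-n) : ℤ):ℝ)*x))).intervalIntegrable _ _)),
    Jval ((k:ℤ)+n), Jval ((k:ℤ)-n)]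
  have h1 : (k:ℤ) + n ≠ 0 := by omega
  rcases eq_or_ne n k with rfl | h
  · simp [h1]
    ring
  · have h2 : (k:ℤ) - n ≠ 0 := by omega
    simp [h1, h2, h]

open Real in
theorem statement_11 (f : ℂ → ℂ) (hf : Differentiable ℂ f)
    (hreal : ∀ x : ℝ, (f x).im = 0) (k : ℕ) (hk : 1 ≤ k) :
    (2 / π) * ∫ x in (0 : ℝ)..(π / 2),
        Real.cos (2 * k * x) * (f ((Real.cos x : ℂ) * Complex.exp (Complex.I * x))).re =
      (1 / (2 ^ (k + 1) * (k.factorial : ℝ))) * (iteratedDeriv k f (1 / 2)).re := by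
  have him : ∀ n : ℕ, ∀ x : ℝ, (iteratedDeriv n f x).im = 0 :=
    fun n => iteratedDeriv_im_zero hf hreal n
  set a : ℕ → ℝ := fun n => (iteratedDeriv n f (1/2)).re / (n.factorial * 2^n) with ha
  -- the function is real-valued at 1/2 etc.; summability of |a|
  have hD : ∀ n : ℕ, (iteratedDeriv n f (1/2) : ℂ) = ((iteratedDeriv n f (1/2)).re : ℂ) := by
    intro n
    have := him n (1/2)
    push_cast at this ⊢
    exact Complex.ext rfl (by simpa using this)
  have hsum1 : Summable (fun n : ℕ =>
      (n.factorial : ℂ)⁻¹ • ((1 : ℂ) - 1/2)^n • iteratedDeriv n f (1/2)) :=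
    (Complex.hasSum_taylorSeries_of_entire hf (1/2) 1).summable
  have hsum : Summable (fun n => |a n|) := by
    have h2 := summable_norm_iff.mpr hsum1
    refine Summable.of_nonneg_of_le (fun n => abs_nonneg _) (fun n => ?_) h2
    simp only [norm_smul, norm_inv, Complex.norm_natCast, norm_pow]
    have h12 : ‖(1 : ℂ) - 1/2‖ = 1/2 := by norm_num
    rw [h12, ha]
    simp only [abs_div]
    rw [abs_of_nonneg (by positivity : (0:ℝ) ≤ (n.factorial : ℝ) * 2^n)]
    rw [div_le_iff₀ (by positivity)]
    have hre : |(iteratedDeriv n f (1/2)).re| ≤ ‖iteratedDeriv n f (1/2)‖ :=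
      Complex.abs_re_le_norm _
    calc |(iteratedDeriv n f (1/2)).re| ≤ ‖iteratedDeriv n f (1/2)‖ := hre
      _ = (↑n.factorial)⁻¹ * (1/2)^n * ‖iteratedDeriv n f (1/2)‖ * (↑n.factorial * 2^n) := by
          field_simp
          rw [mul_assoc, ← mul_pow]; norm_num
      _ = _ := by ring
  -- the geometric identity
  have hz : ∀ x : ℝ, ((Real.cos x : ℂ)) * Complex.exp (Complex.I * x) - 1/2
      = Complex.exp (2 * Complex.I * x) / 2 := by
    intro x
    rw [Complex.ofReal_cos, Complex.cos]
    have e1 : Complex.exp (↑x * Complex.I) * Complex.exp (Complex.I * ↑x)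
        = Complex.exp (2 * Complex.I * ↑x) := by
      rw [← Complex.exp_add]; congr 1; ring
    have e2 : Complex.exp (-(↑x * Complex.I)) * Complex.exp (Complex.I * ↑x) = 1 := by
      rw [← Complex.exp_add, show -(↑x * Complex.I) + Complex.I * ↑x = 0 by ring,
        Complex.exp_zero]
    rw [neg_mul]
    linear_combination (e1 + e2) / 2
  -- pointwise HasSum for real parts
  have hterm : ∀ (n : ℕ) (x : ℝ),
      ((n.factorial : ℂ)⁻¹ • (((Real.cos x : ℂ)) * Complex.exp (Complex.I * x) - 1/2)^n •
        iteratedDeriv n f (1/2)).re = a n * Real.cos (2 * n * x) := by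
    intro n x
    rw [hz x, div_pow, ← Complex.exp_nat_mul]
    have harg : (n : ℂ) * (2 * Complex.I * x) = ((2 * n * x : ℝ) : ℂ) * Complex.I := by
      push_cast; ring
    rw [harg, hD n]
    have : (n.factorial : ℂ)⁻¹ • (Complex.exp (((2 * n * x : ℝ) : ℂ) * Complex.I) / 2^n) •
        (((iteratedDeriv n f (1/2)).re : ℝ) : ℂ)
        = (((((iteratedDeriv n f (1/2)).re : ℝ) / (n.factorial * 2^n) : ℝ)) : ℂ) *
          Complex.exp (((2 * n * x : ℝ) : ℂ) * Complex.I) := by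
      push_cast
      simp only [smul_eq_mul]
      field_simp
    rw [this, Complex.re_ofReal_mul, Complex.exp_ofReal_mul_I_re]
  have hps : ∀ x : ℝ, HasSum (fun n => Real.cos (2 * k * x) * (a n * Real.cos (2 * n * x)))
      (Real.cos (2 * k * x) * (f ((Real.cos x : ℂ) * Complex.exp (Complex.I * x))).re) := by
    intro x
    have hS := Complex.hasSum_taylorSeries_of_entire hf (1/2)
      ((Real.cos x : ℂ) * Complex.exp (Complex.I * x))
    have hRe := Complex.reCLM.hasSum hS
    simp only [Complex.reCLM_apply] at hRe
    have : (fun n => ((n.factorial : ℂ)⁻¹ • (((Real.cos x : ℂ)) * Complex.exp (Complex.I * x)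
        - 1/2)^n • iteratedDeriv n f (1/2)).re) = fun n => a n * Real.cos (2 * n * x) :=
      funext fun n => hterm n x
    rw [this] at hRe
    exact hRe.mul_left _
  -- interchange sum and integral
  have key : HasSum (fun n => ∫ x in (0:ℝ)..(π/2),
        Real.cos (2 * k * x) * (a n * Real.cos (2 * n * x)))
      (∫ x in (0:ℝ)..(π/2),
        Real.cos (2 * k * x) * (f ((Real.cos x : ℂ) * Complex.exp (Complex.I * x))).re) := by
    apply intervalIntegral.hasSum_integral_of_dominated_convergence (bound := fun n _ => |a n|)
    · intro n
      exact ((by fun_prop : Continuous (fun x : ℝ =>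
        Real.cos (2 * k * x) * (a n * Real.cos (2 * n * x)))).aestronglyMeasurable)
    · intro n
      filter_upwards with t _
      rw [Real.norm_eq_abs, abs_mul, abs_mul]
      calc |Real.cos (2*k*t)| * (|a n| * |Real.cos (2*n*t)|)
          ≤ 1 * (|a n| * 1) := by
            gcongr <;> exact Real.abs_cos_le_one _
        _ = |a n| := by ring
    · filter_upwards with t _
      exact hsum
    · exact intervalIntegrable_const
    · filter_upwards with t _
      exact hps t
  -- evaluate the individual integrals
  have hev : (fun n => ∫ x in (0:ℝ)..(π/2),
      Real.cos (2 * k * x) * (a n * Real.cos (2 * n * x)))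
      = fun n => if n = k then (π/4) * a k else 0 := by
    funext n
    have : (fun x : ℝ => Real.cos (2 * k * x) * (a n * Real.cos (2 * n * x)))
        = fun x : ℝ => a n * (Real.cos (2 * k * x) * Real.cos (2 * n * x)) := by
      funext x; ring
    rw [this, intervalIntegral.integral_const_mul, ortho k n hk]
    split_ifs with h
    · subst h; ring
    · ring
  rw [hev] at key
  have : (∫ x in (0:ℝ)..(π/2),
      Real.cos (2 * k * x) * (f ((Real.cos x : ℂ) * Complex.exp (Complex.I * x))).re)
      = (π/4) * a k := ((hasSum_ite_eq k ((π/4) * a k)).unique key).symm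
  rw [this, ha]
  have hπ : (π : ℝ) ≠ 0 := Real.pi_ne_zero
  have hfa : (k.factorial : ℝ) ≠ 0 := Nat.cast_ne_zero.mpr k.factorial_ne_zero
  field_simp
  ring
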